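/- Let (X,φ) be a Smale space and let x ∈ X be an asymptotic p-periodic point for some p ∈ ℤ with p ≠ 0. Then: (i) the limit η^s(x) := lim_{k→∞} φ^{|p|k}(x) exists, belongs to ω(x), and satisfies φ^p(η^s(x)) = η^s(x); (ii) the limit η^u(x) := lim_{k→∞} φ^{−|p|k}(x) exists, belongs to α(x), and satisfies φ^p(η^u(x)) = η^u(x). -/

import Mathlib

open Filter Set Topology

noncomputable section

/-- Integer iterate of a homeomorphism. -/
def hIter {X : Type*} [TopologicalSpace X] (φ : X ≃ₜ X) (n : ℤ) (x : X) : X :=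
  ((φ.toEquiv : Equiv.Perm X) ^ n) x

/-- The cocycle sums `f^n` of a function `f : X → ℤ` along the iterates of `φ`:
`f^n(x) = Σ_{i=0}^{n-1} f(φ^i(x))` for `n > 0`, `f^0 = 0`, and
`f^n(x) = −Σ_{i=n}^{-1} f(φ^i(x))` for `n < 0`. -/
def cSum {X : Type*} [TopologicalSpace X] (φ : X ≃ₜ X) (f : X → ℤ) (n : ℤ) (x : X) : ℤ :=
  if 0 ≤ n then ∑ i ∈ Finset.range n.toNat, f (hIter φ i x)
  else -∑ i ∈ Finset.range (-n).toNat, f (hIter φ (n + i) x)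

/-- Stable asymptotic pairs (limit definition). -/
def asympS {X : Type*} [MetricSpace X] (φ : X ≃ₜ X) : Set (X × X) :=
  {p | Tendsto (fun n : ℕ => dist (hIter φ n p.1) (hIter φ n p.2)) atTop (nhds 0)}

/-- Unstable asymptotic pairs (limit definition). -/
def asympU {X : Type*} [MetricSpace X] (φ : X ≃ₜ X) : Set (X × X) :=
  {p | Tendsto (fun n : ℕ => dist (hIter φ (-(n : ℤ)) p.1) (hIter φ (-(n : ℤ)) p.2))
    atTop (nhds 0)}

/-- Asymptotic pairs (limit definition). -/
def asympA {X : Type*} [MetricSpace X] (φ : X ≃ₜ X) : Set (X × X) := asympS φ ∩ asympU φ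

/-- The `ω`-limit set of `x`. -/
def omegaSet {X : Type*} [MetricSpace X] (φ : X ≃ₜ X) (x : X) : Set X :=
  {z | ∃ n : ℕ → ℕ, StrictMono n ∧ Tendsto (fun i => hIter φ (n i) x) atTop (nhds z)}

/-- The `α`-limit set of `x`. -/
def alphaSet {X : Type*} [MetricSpace X] (φ : X ≃ₜ X) (x : X) : Set X :=
  {z | ∃ n : ℕ → ℤ, StrictAnti n ∧ Tendsto (fun i => hIter φ (n i) x) atTop (nhds z)}

/-- A Smale space structure on a compact metric space `X`. -/
structure SmaleSpace (X : Type*) [MetricSpace X] [CompactSpace X] where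
  phi : X ≃ₜ X
  eps : ℝ
  lam : ℝ
  br : X → X → X
  eps_pos : 0 < eps
  lam_pos : 0 < lam
  lam_lt_one : lam < 1
  br_cont : ContinuousOn (fun p : X × X => br p.1 p.2) {p : X × X | dist p.1 p.2 < eps}
  br_self : ∀ x : X, br x x = x
  br_assoc_left : ∀ x y z : X, dist x y < eps → dist (br x y) z < eps → dist x z < eps →
    br (br x y) z = br x z
  br_assoc_right : ∀ x y z : X, dist y z < eps → dist x (br y z) < eps → dist x z < eps →
    br x (br y z) = br x z
  phi_br : ∀ x y : X, dist x y < eps → dist (phi x) (phi y) < eps →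
    phi (br x y) = br (phi x) (phi y)
  contract_s : ∀ x y z : X, br y x = y → dist x y < eps → br z x = z → dist x z < eps →
    dist (phi y) (phi z) ≤ lam * dist y z
  contract_u : ∀ x y z : X, br x y = y → dist x y < eps → br x z = z → dist x z < eps →
    dist (phi.symm y) (phi.symm z) ≤ lam * dist y z

namespace SmaleSpace

variable {X Y : Type*} [MetricSpace X] [CompactSpace X] [MetricSpace Y] [CompactSpace Y]

/-- Local stable set `X^s(x,ε)`. -/
def Xs (S : SmaleSpace X) (x : X) (ε : ℝ) : Set X := {y | S.br y x = y ∧ dist x y < ε}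

/-- Local unstable set `X^u(x,ε)`. -/
def Xu (S : SmaleSpace X) (x : X) (ε : ℝ) : Set X := {y | S.br x y = y ∧ dist x y < ε}

def Gs0 (S : SmaleSpace X) : Set (X × X) := {p | p.2 ∈ S.Xs p.1 S.eps}

def Gu0 (S : SmaleSpace X) : Set (X × X) := {p | p.2 ∈ S.Xu p.1 S.eps}

/-- `G_φ^{s,n} = (φ×φ)^{-n}(G_φ^{s,0})`. -/
def GsN (S : SmaleSpace X) (n : ℤ) : Set (X × X) :=
  {p | (hIter S.phi n p.1, hIter S.phi n p.2) ∈ S.Gs0}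

/-- `G_φ^{u,n} = (φ×φ)^{n}(G_φ^{u,0})`. -/
def GuN (S : SmaleSpace X) (n : ℤ) : Set (X × X) :=
  {p | (hIter S.phi (-n) p.1, hIter S.phi (-n) p.2) ∈ S.Gu0}

def GaN (S : SmaleSpace X) (n : ℤ) : Set (X × X) := S.GsN n ∩ S.GuN n

/-- The asymptotic equivalence relation `G_φ^a = ⋃_{n ≥ 0} G_φ^{a,n}`. -/
def Ga (S : SmaleSpace X) : Set (X × X) := ⋃ n : ℕ, S.GaN n

lemma gaN_subset_ga (S : SmaleSpace X) (n : ℕ) : S.GaN n ⊆ S.Ga :=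
  Set.subset_iUnion (fun k : ℕ => S.GaN k) n

/-- The inductive limit topology on `G_φ^a`: a set is open iff its intersection with each
`G_φ^{a,n}` is open in the subspace topology from `X × X`. -/
def gaTopology (S : SmaleSpace X) : TopologicalSpace ↥S.Ga :=
  ⨆ n : ℕ, TopologicalSpace.coinduced (Set.inclusion (S.gaN_subset_ga n)) inferInstance

/-- Irreducibility of a Smale space. -/
def Irreducible (S : SmaleSpace X) : Prop :=
  ∀ U V : Set X, IsOpen U → U.Nonempty → IsOpen V → V.Nonempty →
    ∃ K : ℕ, ((hIter S.phi K '' U) ∩ V).Nonempty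

def IsPeriodicPoint (S : SmaleSpace X) (x : X) : Prop :=
  ∃ p : ℕ, 0 < p ∧ hIter S.phi p x = x

/-- `h` is a flip conjugacy between `(X,φ)` and `(Y,ψ)`. -/
def IsFlipConjugacy (S : SmaleSpace X) (T : SmaleSpace Y) (h : X ≃ₜ Y) : Prop :=
  (∀ x, h (S.phi x) = T.phi (h x)) ∨ (∀ x, h (S.phi x) = T.phi.symm (h x))

def FlipConjugate (S : SmaleSpace X) (T : SmaleSpace Y) : Prop :=
  ∃ h : X ≃ₜ Y, IsFlipConjugacy S T h

/-- An isomorphism of the principal étale groupoids `G_φ^a` and `G_ψ^a`: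
a bijection which is a homeomorphism for the inductive limit topologies and preserves
the (equivalence relation) groupoid structure. -/
structure GaIso (S : SmaleSpace X) (T : SmaleSpace Y) where
  toEquiv : ↥S.Ga ≃ ↥T.Ga
  cont : @Continuous _ _ S.gaTopology T.gaTopology toEquiv
  cont_symm : @Continuous _ _ T.gaTopology S.gaTopology toEquiv.symm
  map_mul : ∀ p q r : ↥S.Ga, (p : X × X).2 = (q : X × X).1 →
    (r : X × X) = ((p : X × X).1, (q : X × X).2) →
    (toEquiv p : Y × Y).2 = (toEquiv q : Y × Y).1 ∧
      (toEquiv r : Y × Y) = ((toEquiv p : Y × Y).1, (toEquiv q : Y × Y).2)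

end SmaleSpace


section AuxIter

lemma hIter_add {X : Type*} [TopologicalSpace X] (φ : X ≃ₜ X) (m n : ℤ) (x : X) :
    hIter φ (m + n) x = hIter φ m (hIter φ n x) := by
  simp [hIter, zpow_add, Equiv.Perm.mul_apply]

lemma hIter_zero {X : Type*} [TopologicalSpace X] (φ : X ≃ₜ X) (x : X) :
    hIter φ 0 x = x := by simp [hIter]

lemma hIter_one {X : Type*} [TopologicalSpace X] (φ : X ≃ₜ X) (x : X) :
    hIter φ 1 x = φ x := by simp [hIter]

lemma hIter_neg_one {X : Type*} [TopologicalSpace X] (φ : X ≃ₜ X) (x : X) :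
    hIter φ (-1) x = φ.symm x := by
  have h : (φ.toEquiv : Equiv.Perm X)⁻¹ = φ.symm.toEquiv := rfl
  simp [hIter, zpow_neg, h]

lemma hIter_symm {X : Type*} [TopologicalSpace X] (φ : X ≃ₜ X) (n : ℤ) (x : X) :
    hIter φ.symm n x = hIter φ (-n) x := by
  have h : (φ.symm.toEquiv : Equiv.Perm X) = (φ.toEquiv : Equiv.Perm X)⁻¹ := rfl
  simp [hIter, h, inv_zpow, ← zpow_neg]

lemma continuous_hIter {X : Type*} [TopologicalSpace X] (φ : X ≃ₜ X) (n : ℤ) :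
    Continuous (hIter φ n) := by
  induction n using Int.induction_on with
  | zero => rw [show hIter φ 0 = id from funext (hIter_zero φ)]; exact continuous_id
  | succ k ih =>
      have h : hIter φ ((k : ℤ) + 1) = φ ∘ hIter φ k := by
        funext a
        rw [show ((k : ℤ) + 1) = 1 + k by ring, hIter_add, hIter_one]
        rfl
      rw [h]; exact φ.continuous.comp ih
  | pred k ih =>
      have h : hIter φ (-(k : ℤ) - 1) = φ.symm ∘ hIter φ (-k) := by
        funext a
        rw [show (-(k : ℤ) - 1) = -1 + -k by ring, hIter_add, hIter_neg_one]
        rfl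
      rw [h]; exact φ.symm.continuous.comp ih

end AuxIter

namespace SmaleSpace
variable {X : Type*} [MetricSpace X] [CompactSpace X]

/-- The inverse Smale space: `φ` replaced by `φ⁻¹`, bracket arguments swapped. -/
def symm' (S : SmaleSpace X) : SmaleSpace X where
  phi := S.phi.symm
  eps := S.eps
  lam := S.lam
  br x y := S.br y x
  eps_pos := S.eps_pos
  lam_pos := S.lam_pos
  lam_lt_one := S.lam_lt_one
  br_cont := by
    have : (fun p : X × X => S.br p.2 p.1) =
        (fun p : X × X => S.br p.1 p.2) ∘ Prod.swap := rfl
    rw [this]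
    exact S.br_cont.comp continuous_swap.continuousOn
      (fun p hp => by simpa [Set.mem_setOf_eq, dist_comm] using hp)
  br_self := S.br_self
  br_assoc_left := fun x y z h1 h2 h3 =>
    S.br_assoc_right z y x (by rwa [dist_comm]) (by rwa [dist_comm]) (by rwa [dist_comm])
  br_assoc_right := fun x y z h1 h2 h3 =>
    S.br_assoc_left z y x (by rwa [dist_comm]) (by rwa [dist_comm]) (by rwa [dist_comm])
  phi_br := by
    intro x y h1 h2
    have h3 := S.phi_br (S.phi.symm y) (S.phi.symm x) (by rwa [dist_comm])
      (by simpa [dist_comm] using h1)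
    apply S.phi.injective
    simpa using h3.symm
  contract_s := fun x y z h1 h2 h3 h4 => S.contract_u x y z h1 h2 h3 h4
  contract_u := fun x y z h1 h2 h3 h4 => by
    simpa using S.contract_s x y z h1 h2 h3 h4

@[simp] lemma symm'_phi (S : SmaleSpace X) : S.symm'.phi = S.phi.symm := rfl
@[simp] lemma symm'_eps (S : SmaleSpace X) : S.symm'.eps = S.eps := rfl
@[simp] lemma symm'_lam (S : SmaleSpace X) : S.symm'.lam = S.lam := rfl
@[simp] lemma symm'_br (S : SmaleSpace X) (a b : X) : S.symm'.br a b = S.br b a := rfl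


/-- Uniform smallness of the bracket near the diagonal. -/
lemma bracket_small (S : SmaleSpace X) {δ : ℝ} (hδ : 0 < δ) :
    ∃ ε' : ℝ, 0 < ε' ∧ ε' ≤ δ ∧ ε' < S.eps ∧ ∀ y z : X, dist y z < ε' →
      dist (S.br z y) y < δ ∧ dist (S.br z y) z < δ := by
  set U : Set (X × X) := {p | dist p.1 p.2 < S.eps} with hUdef
  have hU : IsOpen U := isOpen_lt (continuous_fst.dist continuous_snd) continuous_const
  set F : X × X → X := fun p => S.br p.2 p.1 with hFdef
  have hF : ContinuousOn F U := by
    have : F = (fun p : X × X => S.br p.1 p.2) ∘ Prod.swap := rfl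
    rw [this]
    exact S.br_cont.comp continuous_swap.continuousOn
      (fun p hp => by simpa [hUdef, Set.mem_setOf_eq, dist_comm] using hp)
  have hH1 : ContinuousOn (fun p : X × X => dist (F p) p.1) U :=
    continuous_dist.comp_continuousOn (hF.prodMk continuous_fst.continuousOn)
  have hH2 : ContinuousOn (fun p : X × X => dist (F p) p.2) U :=
    continuous_dist.comp_continuousOn (hF.prodMk continuous_snd.continuousOn)
  set V : Set (X × X) :=
    (U ∩ (fun p : X × X => dist (F p) p.1) ⁻¹' Iio δ) ∩
      (U ∩ (fun p : X × X => dist (F p) p.2) ⁻¹' Iio δ) with hVdef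
  have hV : IsOpen V :=
    (hH1.isOpen_inter_preimage hU isOpen_Iio).inter
      (hH2.isOpen_inter_preimage hU isOpen_Iio)
  have hK : IsCompact (Set.range fun a : X => (a, a)) :=
    isCompact_range (continuous_id.prodMk continuous_id)
  have hKV : (Set.range fun a : X => (a, a)) ⊆ V := by
    rintro _ ⟨a, rfl⟩
    have ha : ((a, a) : X × X) ∈ U := by simpa [hUdef] using S.eps_pos
    refine ⟨⟨ha, ?_⟩, ⟨ha, ?_⟩⟩ <;> simp [hFdef, S.br_self, hδ]
  obtain ⟨r, hr, hrV⟩ := hK.exists_thickening_subset_open hV hKV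
  refine ⟨min r (min δ (S.eps / 2)), lt_min hr (lt_min hδ (by linarith [S.eps_pos])), ?_, ?_, ?_⟩
  · exact (min_le_right _ _).trans (min_le_left _ _)
  · exact lt_of_le_of_lt ((min_le_right _ _).trans (min_le_right _ _))
      (by linarith [S.eps_pos])
  · intro y z hyz
    have hmem : (y, z) ∈ Metric.thickening r (Set.range fun a : X => (a, a)) := by
      rw [Metric.mem_thickening_iff]
      refine ⟨(y, y), ⟨y, rfl⟩, ?_⟩
      have : dist ((y, z) : X × X) (y, y) = dist z y := by
        simp [Prod.dist_eq, dist_nonneg]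
      rw [this, dist_comm]
      exact hyz.trans_le (min_le_left _ _)
    obtain ⟨⟨-, h1⟩, ⟨-, h2⟩⟩ := hrV hmem
    exact ⟨h1, h2⟩

/-- Geometric contraction along the local stable set. -/
lemma stable_iter (S : SmaleSpace X) {y z : X} (hbr : S.br z y = z) (hd : dist z y < S.eps)
    (n : ℕ) :
    S.br (hIter S.phi n z) (hIter S.phi n y) = hIter S.phi n z ∧
      dist (hIter S.phi n z) (hIter S.phi n y) ≤ S.lam ^ n * dist z y := by
  have hlam0 := S.lam_pos
  have hlam1 := S.lam_lt_one
  have hpow : ∀ m : ℕ, S.lam ^ m ≤ 1 := fun m => pow_le_one₀ hlam0.le hlam1.le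
  have hsucc : ∀ (m : ℕ) (a : X), hIter S.phi ((m : ℕ) + 1 : ℕ) a = S.phi (hIter S.phi m a) := by
    intro m a
    push_cast
    rw [show ((m : ℤ) + 1) = 1 + m by ring, hIter_add, hIter_one]
  induction n with
  | zero => exact ⟨by simpa [hIter_zero] using hbr, by simp [hIter_zero]⟩
  | succ n ih =>
    have hdn : dist (hIter S.phi n z) (hIter S.phi n y) < S.eps :=
      lt_of_le_of_lt (ih.2.trans (mul_le_of_le_one_left dist_nonneg (hpow n))) hd
    have hc := S.contract_s (hIter S.phi n y) (hIter S.phi n y) (hIter S.phi n z)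
      (S.br_self _) (by simpa using S.eps_pos) ih.1 (by rwa [dist_comm])
    have hd1 : dist (hIter S.phi (n + 1 : ℕ) z) (hIter S.phi (n + 1 : ℕ) y)
        ≤ S.lam ^ (n + 1) * dist z y := by
      rw [hsucc n z, hsucc n y, dist_comm]
      calc dist (S.phi (hIter S.phi n y)) (S.phi (hIter S.phi n z))
          ≤ S.lam * dist (hIter S.phi n y) (hIter S.phi n z) := hc
        _ = S.lam * dist (hIter S.phi n z) (hIter S.phi n y) := by rw [dist_comm]
        _ ≤ S.lam * (S.lam ^ n * dist z y) :=
            mul_le_mul_of_nonneg_left ih.2 hlam0.le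
        _ = S.lam ^ (n + 1) * dist z y := by ring
    have hd1' : dist (hIter S.phi (n + 1 : ℕ) z) (hIter S.phi (n + 1 : ℕ) y) < S.eps :=
      lt_of_le_of_lt (hd1.trans (mul_le_of_le_one_left dist_nonneg (hpow (n + 1)))) hd
    have hbr1 : S.br (hIter S.phi (n + 1 : ℕ) z) (hIter S.phi (n + 1 : ℕ) y)
        = hIter S.phi (n + 1 : ℕ) z := by
      have hphibr := S.phi_br (hIter S.phi n z) (hIter S.phi n y) hdn
        (by rw [← hsucc n z, ← hsucc n y]; exact hd1')
      rw [ih.1] at hphibr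
      rw [hsucc n z, hsucc n y, ← hphibr]
    exact ⟨hbr1, hd1⟩

/-- Geometric contraction backwards along the local unstable set. -/
lemma unstable_iter (S : SmaleSpace X) {y z : X} (hbr : S.br y z = z) (hd : dist y z < S.eps)
    (n : ℕ) :
    dist (hIter S.phi (-(n : ℤ)) y) (hIter S.phi (-(n : ℤ)) z) ≤ S.lam ^ n * dist y z := by
  have h := (S.symm'.stable_iter (z := z) (y := y)
    (by rw [symm'_br]; exact hbr) (by rw [symm'_eps, dist_comm]; exact hd) n).2
  rw [symm'_lam] at h
  simp only [symm'_phi, hIter_symm] at h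
  rw [dist_comm z y] at h
  rwa [dist_comm]

end SmaleSpace

section Asymp
variable {X : Type*} [MetricSpace X]

lemma asympS_symm_pair {φ : X ≃ₜ X} {a b : X} (h : (a, b) ∈ asympS φ) :
    (b, a) ∈ asympS φ := by
  simpa [asympS, dist_comm] using h

lemma asympS_shift {φ : X ≃ₜ X} {a b : X} (h : (a, b) ∈ asympS φ) (m : ℤ) :
    (hIter φ m a, hIter φ m b) ∈ asympS φ := by
  have hg : Filter.Tendsto (fun n : ℕ => ((n : ℤ) + m).toNat) Filter.atTop Filter.atTop := by
    refine Filter.tendsto_atTop.2 fun b => Filter.eventually_atTop.2 ⟨b + m.natAbs, fun n hn => ?_⟩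
    omega
  have h2 := h.comp hg
  refine h2.congr' ?_
  filter_upwards [Filter.eventually_ge_atTop m.natAbs] with n hn
  have he : (((n : ℤ) + m).toNat : ℤ) = (n : ℤ) + m := by omega
  simp only [Function.comp]
  rw [he, hIter_add, hIter_add]

lemma asympU_iff {φ : X ≃ₜ X} {a b : X} :
    (a, b) ∈ asympU φ ↔ (a, b) ∈ asympS φ.symm := by
  simp [asympU, asympS, hIter_symm]

end Asymp

namespace SmaleSpace
variable {X : Type*} [MetricSpace X] [CompactSpace X]

/-- Core convergence lemma: if `φ^q x` is stably asymptotic to `x`, `q ≥ 1`, then the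
sequence `φ^{qk} x` converges to a fixed point of `φ^q`. -/
lemma core (S : SmaleSpace X) (x : X) (q : ℤ) (hq : 1 ≤ q)
    (hA : (hIter S.phi q x, x) ∈ asympS S.phi) :
    ∃ ys : X, Filter.Tendsto (fun k : ℕ => hIter S.phi (q * k) x) Filter.atTop (nhds ys) ∧
      hIter S.phi q ys = ys := by
  have hlam0 := S.lam_pos
  have hlam1 := S.lam_lt_one
  have heps := S.eps_pos
  set φ := S.phi with hφ
  obtain ⟨ε', hε'0, hε'δ, hε'eps, hbr2⟩ := S.bracket_small (δ := S.eps / 3) (by linarith)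
  set Dn : ℕ → ℝ := fun n => dist (hIter φ ((n : ℤ) + q) x) (hIter φ (n : ℤ) x) with hDn
  have hA' : Filter.Tendsto Dn Filter.atTop (nhds 0) := by
    refine Filter.Tendsto.congr (fun n => ?_) hA
    simp only [hDn]
    rw [hIter_add]
  obtain ⟨N, hN⟩ : ∃ N : ℕ, ∀ n ≥ N, Dn n < ε' := by
    have := hA'.eventually (eventually_lt_nhds hε'0)
    exact Filter.eventually_atTop.1 this
  set xN : X := hIter φ (N : ℤ) x with hxN
  set yN : X := hIter φ ((N : ℤ) + q) x with hyN
  have hxNn : ∀ n : ℕ, hIter φ (n : ℤ) xN = hIter φ (((N + n : ℕ) : ℤ)) x := by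
    intro n; rw [hxN, ← hIter_add]; congr 1; push_cast; ring
  have hyNn : ∀ n : ℕ, hIter φ (n : ℤ) yN = hIter φ (((N + n : ℕ) : ℤ) + q) x := by
    intro n; rw [hyN, ← hIter_add]; congr 1; push_cast; ring
  have hdNy : dist yN xN < ε' := hN N le_rfl
  have hdxy : dist xN yN < S.eps := by rw [dist_comm]; exact hdNy.trans hε'eps
  obtain ⟨h21, h22⟩ := hbr2 yN xN hdNy
  set w : X := S.br xN yN with hw
  have hw_s : S.br w yN = w :=
    S.br_assoc_left xN yN yN hdxy (h21.trans_le (by linarith)) hdxy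
  have h22' : dist xN w < S.eps / 3 := by
    first
      | exact h22
      | · rw [dist_comm]; exact h22
      | · rw [dist_comm] at h22; exact h22
  have hw_u : S.br xN w = w :=
    S.br_assoc_right xN xN yN hdxy (h22'.trans_le (by linarith)) hdxy
  have hdwy : dist w yN < S.eps := h21.trans_le (by linarith)
  have Hs := fun n : ℕ => S.stable_iter hw_s hdwy n
  have hbound : ∀ n : ℕ, dist (hIter φ (n : ℤ) xN) (hIter φ (n : ℤ) w) < ε' + S.eps / 3 := by
    intro n
    calc dist (hIter φ (n : ℤ) xN) (hIter φ (n : ℤ) w)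
        ≤ dist (hIter φ (n : ℤ) xN) (hIter φ (n : ℤ) yN)
          + dist (hIter φ (n : ℤ) yN) (hIter φ (n : ℤ) w) := dist_triangle _ _ _
      _ < ε' + S.eps / 3 := by
          have h1 : dist (hIter φ (n : ℤ) xN) (hIter φ (n : ℤ) yN) < ε' := by
            rw [hxNn, hyNn, dist_comm]
            exact hN (N + n) (Nat.le_add_right _ _)
          have h2 : dist (hIter φ (n : ℤ) yN) (hIter φ (n : ℤ) w) ≤ dist w yN := by
            rw [dist_comm]
            exact (Hs n).2.trans (mul_le_of_le_one_left dist_nonneg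
              (pow_le_one₀ hlam0.le hlam1.le))
          have h3 : dist w yN < S.eps / 3 := h21
          linarith
  have hE : ε' + S.eps / 3 < S.eps := by linarith
  have hsucc : ∀ (m : ℕ) (a : X), hIter φ (((m + 1 : ℕ)) : ℤ) a = φ (hIter φ (m : ℤ) a) := by
    intro m a; push_cast
    rw [show ((m : ℤ) + 1) = 1 + m by ring, hIter_add, hIter_one]
  have hbru : ∀ n : ℕ, S.br (hIter φ (n : ℤ) xN) (hIter φ (n : ℤ) w) = hIter φ (n : ℤ) w := by
    intro n
    induction n with
    | zero => simpa [hIter_zero] using hw_u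
    | succ n ih =>
      have h1 : dist (hIter φ (n : ℤ) xN) (hIter φ (n : ℤ) w) < S.eps := (hbound n).trans hE
      have h2 : dist (φ (hIter φ (n : ℤ) xN)) (φ (hIter φ (n : ℤ) w)) < S.eps := by
        rw [← hsucc n xN, ← hsucc n w]; exact (hbound (n + 1)).trans hE
      have hphibr := S.phi_br _ _ h1 h2
      rw [ih] at hphibr
      rw [hsucc n xN, hsucc n w, ← hphibr]
  have hwxN : w = xN := by
    have key : ∀ n : ℕ, dist xN w ≤ S.lam ^ n * (ε' + S.eps / 3) := by
      intro n
      have h := S.unstable_iter (hbru n) ((hbound n).trans hE) n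
      have hcancel : ∀ a : X, hIter φ (-(n : ℤ)) (hIter φ (n : ℤ) a) = a := by
        intro a; rw [← hIter_add]; simp [hIter_zero]
      rw [hcancel, hcancel] at h
      exact h.trans (mul_le_mul_of_nonneg_left (hbound n).le (pow_nonneg hlam0.le n))
    have hlim : Filter.Tendsto (fun n : ℕ => S.lam ^ n * (ε' + S.eps / 3))
        Filter.atTop (nhds 0) := by
      simpa using (tendsto_pow_atTop_nhds_zero_of_lt_one hlam0.le hlam1).mul_const
        (ε' + S.eps / 3)
    have h0 : dist xN w ≤ 0 := ge_of_tendsto hlim (Filter.Eventually.of_forall key)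
    exact (dist_le_zero.1 h0).symm
  have hxs : S.br xN yN = xN := by rw [← hw, hwxN]
  have Hfin := fun n : ℕ => (S.stable_iter hxs hdxy n).2
  have hgeo : ∀ n : ℕ, Dn (N + n) ≤ S.lam ^ n * ε' := by
    intro n
    have h := Hfin n
    rw [hxNn, hyNn] at h
    calc Dn (N + n) = dist (hIter φ (((N + n : ℕ) : ℤ)) x)
          (hIter φ (((N + n : ℕ) : ℤ) + q) x) := dist_comm _ _
      _ ≤ S.lam ^ n * dist xN yN := h
      _ ≤ S.lam ^ n * ε' := mul_le_mul_of_nonneg_left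
          (by rw [dist_comm]; exact hdNy.le) (pow_nonneg hlam0.le n)
  obtain ⟨Dd, hDd⟩ : ∃ C : ℝ, ∀ a b : X, dist a b ≤ C := by
    obtain ⟨C, hC⟩ := Metric.isBounded_iff.1 ((isCompact_univ : IsCompact (Set.univ : Set X)).isBounded)
    exact ⟨C, fun a b => hC (Set.mem_univ a) (Set.mem_univ b)⟩
  have hDd0 : 0 ≤ Dd := le_trans dist_nonneg (hDd x x)
  set a : ℕ → X := fun k => hIter φ (q * k) x with ha
  set C : ℝ := (Dd + ε') / S.lam ^ N with hCdef
  have hC : ∀ k : ℕ, dist (a k) (a (k + 1)) ≤ C * S.lam ^ k := by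
    intro k
    by_cases hk : N ≤ k
    · have h0 : (0 : ℤ) ≤ q * k := by positivity
      have hkq : (k : ℤ) ≤ q * k := le_mul_of_one_le_left (by positivity) hq
      set m : ℕ := (q * (k : ℤ)).toNat with hmdef
      have hm : (m : ℤ) = q * k := Int.toNat_of_nonneg h0
      have hkm : k ≤ m := by
        have : (k : ℤ) ≤ (m : ℤ) := by rw [hm]; exact hkq
        exact_mod_cast this
      have hNm : N ≤ m := hk.trans hkm
      set n : ℕ := m - N with hndef
      have hmn : m = N + n := by omega
      have e1 : a k = hIter φ (((N + n : ℕ) : ℤ)) x := by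
        show hIter φ (q * k) x = _
        congr 1
        rw [show ((N + n : ℕ) : ℤ) = (m : ℤ) from by exact_mod_cast hmn.symm, hm]
      have e2 : a (k + 1) = hIter φ (((N + n : ℕ) : ℤ) + q) x := by
        show hIter φ (q * ((k : ℕ) + 1 : ℕ)) x = _
        congr 1
        rw [show ((N + n : ℕ) : ℤ) = (m : ℤ) from by exact_mod_cast hmn.symm, hm]
        push_cast; ring
      have hCk : C * S.lam ^ k = (Dd + ε') * S.lam ^ (k - N) := by
        have hpowk : S.lam ^ k = S.lam ^ (k - N) * S.lam ^ N := by
          rw [← pow_add, Nat.sub_add_cancel hk]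
        rw [hCdef, hpowk]
        field_simp
        try ring
      calc dist (a k) (a (k + 1)) = Dn (N + n) := by rw [e1, e2, dist_comm]
        _ ≤ S.lam ^ n * ε' := hgeo n
        _ ≤ S.lam ^ (k - N) * ε' := mul_le_mul_of_nonneg_right
            (pow_le_pow_of_le_one hlam0.le hlam1.le (by omega)) hε'0.le
        _ ≤ C * S.lam ^ k := by
            rw [hCk, mul_comm]
            exact mul_le_mul_of_nonneg_right (le_add_of_nonneg_left hDd0)
              (pow_nonneg hlam0.le _)
    · push_neg at hk
      calc dist (a k) (a (k + 1)) ≤ Dd := hDd _ _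
        _ ≤ C * S.lam ^ k := by
            rw [hCdef, div_mul_eq_mul_div, le_div_iff₀ (pow_pos hlam0 N)]
            exact mul_le_mul (le_add_of_nonneg_right hε'0.le)
              (pow_le_pow_of_le_one hlam0.le hlam1.le hk.le)
              (pow_nonneg hlam0.le N) (add_nonneg hDd0 hε'0.le)
  have hcauchy : CauchySeq a := cauchySeq_of_le_geometric S.lam C hlam1 hC
  obtain ⟨ys, hys⟩ := cauchySeq_tendsto_of_complete hcauchy
  refine ⟨ys, hys, ?_⟩
  have hstep : ∀ k : ℕ, hIter φ q (a k) = a (k + 1) := by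
    intro k
    show _ = hIter φ (q * ((k : ℕ) + 1 : ℕ)) x
    rw [← hIter_add]; congr 1; push_cast; ring
  have t1 : Filter.Tendsto (fun k : ℕ => hIter φ q (a k)) Filter.atTop
      (nhds (hIter φ q ys)) := ((continuous_hIter φ q).tendsto ys).comp hys
  have t2 : Filter.Tendsto (fun k : ℕ => a (k + 1)) Filter.atTop (nhds ys) :=
    hys.comp (Filter.tendsto_add_atTop_nat 1)
  exact tendsto_nhds_unique (Filter.Tendsto.congr hstep t1) t2

end SmaleSpace


/-- For an asymptotic `p`-periodic point `x` of a Smale space, the limits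
`η^s(x) = lim_k φ^{|p|k}(x)` and `η^u(x) = lim_k φ^{-|p|k}(x)` exist, belong to `ω(x)`
resp. `α(x)`, and are fixed by `φ^p`. -/
theorem etaS_etaU_exist {X : Type*} [MetricSpace X] [CompactSpace X] (S : SmaleSpace X)
    (x : X) (p : ℤ) (hp : p ≠ 0) (hx : (hIter S.phi p x, x) ∈ asympA S.phi) :
    (∃ ys : X, Tendsto (fun k : ℕ => hIter S.phi (|p| * k) x) atTop (nhds ys) ∧
      ys ∈ omegaSet S.phi x ∧ hIter S.phi p ys = ys) ∧
    (∃ yu : X, Tendsto (fun k : ℕ => hIter S.phi (-(|p| * k)) x) atTop (nhds yu) ∧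
      yu ∈ alphaSet S.phi x ∧ hIter S.phi p yu = yu) := by
  have hq : (1 : ℤ) ≤ |p| := Int.one_le_abs hp
  have habs : ((|p|.toNat : ℤ)) = |p| := Int.toNat_of_nonneg (abs_nonneg p)
  have hqN : 1 ≤ |p|.toNat := by omega
  obtain ⟨hxS, hxU⟩ := hx
  set φ := S.phi with hφ
  have hcancel : ∀ (m : ℤ) (a : X), hIter φ (-m) (hIter φ m a) = a := by
    intro m a; rw [← hIter_add]; simp [hIter_zero]
  -- Part (i): stable side
  have hS : (hIter φ |p| x, x) ∈ asympS φ := by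
    rcases abs_choice p with h | h
    · rw [h]; exact hxS
    · rw [h]
      have h2 := asympS_shift (asympS_symm_pair hxS) (-p)
      rwa [hcancel p x] at h2
  obtain ⟨ys, hys, hfixq⟩ := S.core x |p| hq hS
  have hmemω : ys ∈ omegaSet φ x := by
    refine ⟨fun i => |p|.toNat * i, ?_, ?_⟩
    · exact fun i j hij => mul_lt_mul_of_pos_left hij (by omega)
    · refine Filter.Tendsto.congr (fun i => ?_) hys
      congr 1
      push_cast [habs]
      ring
  have hfixp : hIter φ p ys = ys := by
    rcases abs_choice p with h | h
    · rw [← h]; exact hfixq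
    · rw [show p = -|p| by rw [h, neg_neg]]
      conv_lhs => rw [← hfixq]
      exact hcancel _ _
  -- Part (ii): unstable side
  have hU2 : (hIter φ.symm |p| x, x) ∈ asympS φ.symm := by
    have h2 : (hIter φ.symm (-p) x, x) ∈ asympS φ.symm := by
      have h3 := (asympU_iff).1 hxU
      rwa [show hIter φ p x = hIter φ.symm (-p) x from by rw [hIter_symm, neg_neg]] at h3
    rcases abs_choice p with h | h
    · rw [h]
      have h3 := asympS_shift (asympS_symm_pair h2) p
      have h4 : hIter φ.symm p (hIter φ.symm (-p) x) = x := by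
        rw [← hIter_add]; simp [hIter_zero]
      rwa [h4] at h3
    · rw [h]; exact h2
  obtain ⟨yu, hyu, hfixq'⟩ := S.symm'.core x |p| hq (by simpa using hU2)
  have hyu' : Tendsto (fun k : ℕ => hIter φ (-(|p| * k)) x) atTop (nhds yu) := by
    refine Filter.Tendsto.congr (fun k => ?_) hyu
    rw [SmaleSpace.symm'_phi, hIter_symm]
  have hfix' : hIter φ (-|p|) yu = yu := by
    have := hfixq'
    rwa [SmaleSpace.symm'_phi, hIter_symm] at this
  have hfixyu : hIter φ p yu = yu := by
    rcases abs_choice p with h | h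
    · have h2 := congrArg (hIter φ |p|) hfix'
      rw [← hIter_add] at h2
      simp only [add_neg_cancel, hIter_zero] at h2
      rw [show p = |p| from h.symm]
      exact h2.symm
    · rw [show p = -|p| by rw [h, neg_neg]]
      exact hfix'
  have hmemα : yu ∈ alphaSet φ x := by
    refine ⟨fun i => -(|p| * i), ?_, hyu'⟩
    intro i j hij
    have : |p| * (i : ℤ) < |p| * (j : ℤ) :=
      mul_lt_mul_of_pos_left (by exact_mod_cast hij) (by omega)
    show -(|p| * (j : ℤ)) < -(|p| * (i : ℤ))
    linarith
  exact ⟨⟨ys, hys, hmemω, hfixp⟩, ⟨yu, hyu', hmemα, hfixyu⟩⟩
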